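/- Any contractive nuclear map is a point-norm limit of maps factoring via contractive c.p. maps through matrix algebras: if A and B are C*-algebras and ρ : A → B is a nuclear c.p. map with ‖ρ‖ ≤ 1, then for every finite subset F ⊆ A and every ε > 0 there exist n ≥ 1 and c.p. maps ψ : A → Mₙ(ℂ) and η : Mₙ(ℂ) → B with ‖ψ‖ ≤ 1 and ‖η‖ ≤ 1 such that ‖ρ(a) − η(ψ(a))‖ < ε for all a ∈ F. -/

import Mathlib

open scoped Matrix.Norms.L2Operator

/-- A linear map between (C*-)algebras is completely positive if the induced entrywise map on
`n × n` matrices sends positive elements (i.e. elements of the form `star y * y`) to positive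
elements, for every `n`. -/
def IsCPMap {A B : Type*} [NonUnitalRing A] [StarRing A] [Module ℂ A]
    [NonUnitalRing B] [StarRing B] [Module ℂ B] (φ : A →ₗ[ℂ] B) : Prop :=
  ∀ (n : ℕ) (y : Matrix (Fin n) (Fin n) A), ∃ z : Matrix (Fin n) (Fin n) B,
    (star y * y).map φ = star z * z

/-- A map between C*-algebras is nuclear if it can be approximated in the point-norm topology
by compositions of completely positive maps through matrix algebras. -/
def IsNuclearMap {A B : Type*} [NonUnitalRing A] [StarRing A] [Module ℂ A]
    [NonUnitalNormedRing B] [StarRing B] [Module ℂ B] (ρ : A → B) : Prop :=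
  ∀ (F : Finset A) (ε : ℝ), 0 < ε →
    ∃ (n : ℕ), 0 < n ∧
      ∃ (ψ : A →ₗ[ℂ] Matrix (Fin n) (Fin n) ℂ) (η : Matrix (Fin n) (Fin n) ℂ →ₗ[ℂ] B),
        IsCPMap ψ ∧ IsCPMap η ∧ ∀ a ∈ F, ‖ρ a - η (ψ a)‖ < ε

/-! ### Auxiliary material -/

section Aux

open scoped CStarAlgebra InnerProductSpace
open Filter

/-- The spectral partial order on a non-unital C⋆-algebra, pulled back from the unitization. -/
noncomputable def nonunitalPartialOrder (C : Type*) [NonUnitalCStarAlgebra C] : PartialOrder C :=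
  letI : PartialOrder C⁺¹ := CStarAlgebra.spectralOrder _
  PartialOrder.lift (Unitization.inr : C → C⁺¹) Unitization.inr_injective

lemma nonunitalStarOrderedRing (C : Type*) [NonUnitalCStarAlgebra C] :
    letI := nonunitalPartialOrder C; StarOrderedRing C := by
  letI := nonunitalPartialOrder C
  letI : PartialOrder C⁺¹ := CStarAlgebra.spectralOrder _
  haveI : StarOrderedRing C⁺¹ := CStarAlgebra.spectralOrderedRing _
  refine StarOrderedRing.of_le_iff fun x y => ?_
  constructor
  · intro h
    have h' : (0 : C⁺¹) ≤ Unitization.inr (y - x) := by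
      rw [Unitization.inr_sub ℂ, sub_nonneg]
      exact h
    have hsa : IsSelfAdjoint (y - x) := by
      rw [← Unitization.isSelfAdjoint_inr (R := ℂ)]
      exact .of_nonneg h'
    have hspec : ∀ t ∈ quasispectrum ℝ (y - x), 0 ≤ t := by
      rw [Unitization.quasispectrum_eq_spectrum_inr' ℝ ℂ]
      exact (StarOrderedRing.nonneg_iff_spectrum_nonneg (R := ℝ) _ (.of_nonneg h')).mp h'
    refine ⟨cfcₙ Real.sqrt (y - x), ?_⟩
    have hs : IsSelfAdjoint (cfcₙ Real.sqrt (y - x)) := cfcₙ_predicate _ _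
    have hc : cfcₙ (fun t : ℝ => Real.sqrt t * Real.sqrt t) (y - x) = y - x := by
      calc cfcₙ (fun t : ℝ => Real.sqrt t * Real.sqrt t) (y - x)
          = cfcₙ (fun t : ℝ => t) (y - x) :=
            cfcₙ_congr fun t ht => Real.mul_self_sqrt (hspec t ht)
        _ = y - x := cfcₙ_id ℝ (y - x)
    rw [hs.star_eq, ← cfcₙ_mul _ _ (y - x), hc]
    abel
  · rintro ⟨s, rfl⟩
    show (Unitization.inr x : C⁺¹) ≤ Unitization.inr (x + star s * s)
    rw [Unitization.inr_add ℂ, le_add_iff_nonneg_right, Unitization.inr_mul ℂ,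
      Unitization.inr_star]
    exact star_mul_self_nonneg _

/-- Cauchy–Schwarz for pairs in a non-unital C⋆-algebra. -/
lemma cs2 {C : Type*} [NonUnitalCStarAlgebra C] (x y : Fin 2 → C) :
    ‖∑ i, star (x i) * y i‖ ≤
      Real.sqrt ‖∑ i, star (x i) * x i‖ * Real.sqrt ‖∑ i, star (y i) * y i‖ := by
  letI : PartialOrder C⁺¹ := CStarAlgebra.spectralOrder _
  haveI : StarOrderedRing C⁺¹ := CStarAlgebra.spectralOrderedRing _
  set E := WithCStarModule (C⁺¹) (∀ _ : Fin 2, C⁺¹)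
  let x' : E := (WithCStarModule.equiv (C⁺¹) _).symm fun i => (star (x i) : C⁺¹)
  let y' : E := (WithCStarModule.equiv (C⁺¹) _).symm fun i => (star (y i) : C⁺¹)
  have key := CStarModule.norm_inner_le (A := C⁺¹) E (x := x') (y := y')
  have hinner : ∀ (u v : Fin 2 → C),
      ⟪((WithCStarModule.equiv (C⁺¹) _).symm fun i => ((star (u i) : C⁺¹))) ,
        ((WithCStarModule.equiv (C⁺¹) _).symm fun i => ((star (v i) : C⁺¹)))⟫_(C⁺¹)
        = (↑(∑ i, star (v i) * u i) : C⁺¹) := by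
    intro u v
    rw [WithCStarModule.pi_inner]
    have h1 : ∀ i : Fin 2,
        ⟪(((WithCStarModule.equiv (C⁺¹) _).symm fun i => ((star (u i) : C⁺¹))) : E) i,
          (((WithCStarModule.equiv (C⁺¹) _).symm fun i => ((star (v i) : C⁺¹))) : E) i⟫_(C⁺¹)
          = ((star (v i) * u i : C) : C⁺¹) := fun i => by
      simp [WithCStarModule.equiv_symm_pi_apply, WithCStarModule.inner_def,
        Unitization.inr_mul, Unitization.inr_star]
    rw [Finset.sum_congr rfl fun i _ => h1 i]
    exact (map_sum (Unitization.inrNonUnitalStarAlgHom ℂ C) _ _).symm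
  have hnorm : ∀ (u : Fin 2 → C),
      ‖((WithCStarModule.equiv (C⁺¹) _).symm fun i => ((star (u i) : C⁺¹)) : E)‖
        = Real.sqrt ‖∑ i, star (u i) * u i‖ := by
    intro u
    rw [WithCStarModule.pi_norm]
    congr 1
    rw [show ∑ i, ⟪(((WithCStarModule.equiv (C⁺¹) _).symm fun i => ((star (u i) : C⁺¹))) : E) i,
      (((WithCStarModule.equiv (C⁺¹) _).symm fun i => ((star (u i) : C⁺¹))) : E) i⟫_(C⁺¹)
        = ⟪((WithCStarModule.equiv (C⁺¹) _).symm fun i => ((star (u i) : C⁺¹)) : E),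
          ((WithCStarModule.equiv (C⁺¹) _).symm fun i => ((star (u i) : C⁺¹)) : E)⟫_(C⁺¹) from rfl,
      hinner u u, Unitization.norm_inr]
  rw [hinner x y, Unitization.norm_inr] at key
  rw [hnorm x, hnorm y] at key
  have hsw : ‖∑ i, star (y i) * x i‖ = ‖∑ i, star (x i) * y i‖ := by
    rw [← norm_star, star_sum]; simp [star_mul]
  rw [hsw] at key
  exact key

lemma corner2 {C : Type*} [NonUnitalCStarAlgebra C] (z : Matrix (Fin 2) (Fin 2) C) :
    ‖(star z * z) 0 1‖ ≤
      Real.sqrt ‖(star z * z) 0 0‖ * Real.sqrt ‖(star z * z) 1 1‖ := by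
  have h : ∀ i j : Fin 2, (star z * z) i j = ∑ k, star (z k i) * z k j := by
    intro i j
    rw [Matrix.mul_apply]
    exact Finset.sum_congr rfl fun k _ => by rw [Matrix.star_apply]
  rw [h 0 1, h 0 0, h 1 1]
  exact cs2 _ _

lemma cp_corner {A C : Type*} [NonUnitalCStarAlgebra A] [NonUnitalCStarAlgebra C]
    {φ : A →ₗ[ℂ] C} (hφ : IsCPMap φ) (y : Matrix (Fin 2) (Fin 2) A) :
    ‖φ ((star y * y) 0 1)‖ ≤
      Real.sqrt ‖φ ((star y * y) 0 0)‖ * Real.sqrt ‖φ ((star y * y) 1 1)‖ := by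
  obtain ⟨z, hz⟩ := hφ 2 y
  have h : ∀ i j, φ ((star y * y) i j) = (star z * z) i j := fun i j => by
    rw [← hz]; rfl
  rw [h 0 1, h 0 0, h 1 1]
  exact corner2 z

lemma exists_inr_mul {C : Type*} [NonUnitalCStarAlgebra C] (s : C⁺¹) (c : C) :
    ∃ t : C, (t : C⁺¹) = s * c := by
  refine ⟨s.fst • c + s.snd * c, ?_⟩
  conv_rhs => rw [← Unitization.inl_fst_add_inr_snd_eq s]
  rw [add_mul, Unitization.inr_add, Unitization.inr_mul, Unitization.inl_mul_inr,
    Unitization.inr_smul]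

lemma exists_witness {C : Type*} [NonUnitalCStarAlgebra C] (a c : C) (hc : IsSelfAdjoint c) :
    ∃ y : Matrix (Fin 2) (Fin 2) C, (star y * y) 0 0 = c * c ∧
      (star y * y) 0 1 = c * a * c ∧ (star y * y) 1 1 = ‖a‖ ^ 2 • (c * c) := by
  letI : PartialOrder C⁺¹ := CStarAlgebra.spectralOrder _
  haveI : StarOrderedRing C⁺¹ := CStarAlgebra.spectralOrderedRing _
  set p : C⁺¹ := algebraMap ℝ C⁺¹ (‖a‖ ^ 2) - star (a : C⁺¹) * (a : C⁺¹) with hp_def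
  have hp_sa : IsSelfAdjoint p := by
    refine IsSelfAdjoint.sub ?_ (IsSelfAdjoint.star_mul_self _)
    exact IsSelfAdjoint.algebraMap _ (star_trivial _)
  have hp_nonneg : (0 : C⁺¹) ≤ p := by
    rw [hp_def, sub_nonneg]
    calc star (a : C⁺¹) * (a : C⁺¹)
        ≤ algebraMap ℝ C⁺¹ ‖star (a : C⁺¹) * (a : C⁺¹)‖ :=
          IsSelfAdjoint.le_algebraMap_norm_self (IsSelfAdjoint.star_mul_self _)
    _ = algebraMap ℝ C⁺¹ (‖a‖ ^ 2) := by
          rw [CStarRing.norm_star_mul_self, Unitization.norm_inr, pow_two]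
  obtain ⟨s, hs_sa, -, hs_sq⟩ :=
    CFC.exists_sqrt_of_isSelfAdjoint_of_quasispectrumRestricts hp_sa (by
      have h := hp_nonneg
      exact (sub_zero p) ▸ h.2)
  obtain ⟨t, ht⟩ := exists_inr_mul s c
  refine ⟨Matrix.of ![![c, a * c], ![0, t]], ?_, ?_, ?_⟩
  · rw [Matrix.mul_apply, Fin.sum_univ_two]
    simp [Matrix.star_apply, hc.star_eq]
  · rw [Matrix.mul_apply, Fin.sum_univ_two]
    simp [Matrix.star_apply, hc.star_eq, mul_assoc]
  · rw [Matrix.mul_apply, Fin.sum_univ_two]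
    simp only [Matrix.star_apply]
    apply Unitization.inr_injective (R := ℂ)
    have hcoe : ∀ u v : C, ((star u * v : C) : C⁺¹) = star (u : C⁺¹) * (v : C⁺¹) := fun u v => by
      rw [Unitization.inr_mul, Unitization.inr_star]
    simp only [Matrix.cons_val', Matrix.cons_val_zero, Matrix.cons_val_one, Matrix.head_cons,
      Matrix.empty_val', Matrix.cons_val_fin_one, Matrix.head_fin_const, Matrix.of_apply]
    rw [Unitization.inr_add, hcoe, hcoe, ht]
    have hc' : star (c : C⁺¹) = (c : C⁺¹) := by rw [← Unitization.inr_star, hc.star_eq]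
    have hac : ((a * c : C) : C⁺¹) = (a : C⁺¹) * (c : C⁺¹) := Unitization.inr_mul ℂ a c
    have hrhs : ((‖a‖ ^ 2 • (c * c) : C) : C⁺¹)
        = (c : C⁺¹) * (algebraMap ℝ C⁺¹ (‖a‖ ^ 2)) * (c : C⁺¹) := by
      rw [Unitization.inr_smul, Unitization.inr_mul]
      rw [Algebra.algebraMap_eq_smul_one, mul_smul_comm, smul_mul_assoc, mul_one]
    rw [hac, hrhs, star_mul, star_mul, hc', hs_sa.star_eq]
    have hsq : s * s = p := hs_sq
    calc (c : C⁺¹) * star (a : C⁺¹) * ((a : C⁺¹) * (c : C⁺¹)) + (c : C⁺¹) * s * (s * (c : C⁺¹))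
        = (c : C⁺¹) * (star (a : C⁺¹) * (a : C⁺¹) + s * s) * (c : C⁺¹) := by noncomm_ring
      _ = (c : C⁺¹) * (algebraMap ℝ C⁺¹ (‖a‖ ^ 2)) * (c : C⁺¹) := by
          rw [hsq, hp_def, add_sub_cancel]

/-- The key inequality: a completely positive map conjugated by a selfadjoint element. -/
lemma key_ineq {A C : Type*} [NonUnitalCStarAlgebra A] [NonUnitalCStarAlgebra C]
    {φ : A →ₗ[ℂ] C} (hφ : IsCPMap φ) {c : A} (hc : IsSelfAdjoint c) (a : A) :
    ‖φ (c * a * c)‖ ≤ ‖a‖ * ‖φ (c * c)‖ := by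
  obtain ⟨y, h00, h01, h11⟩ := exists_witness a c hc
  have h := cp_corner hφ y
  rw [h00, h01, h11] at h
  have hsm : φ (‖a‖ ^ 2 • (c * c)) = ‖a‖ ^ 2 • φ (c * c) := by
    rw [← Complex.coe_smul, map_smul, Complex.coe_smul]
  rw [hsm] at h
  have h2 : ‖(‖a‖ ^ 2 : ℝ) • φ (c * c)‖ = ‖a‖ ^ 2 * ‖φ (c * c)‖ := by
    rw [norm_smul, Real.norm_of_nonneg (by positivity)]
  rw [h2] at h
  calc ‖φ (c * a * c)‖ ≤ Real.sqrt ‖φ (c * c)‖ * Real.sqrt (‖a‖ ^ 2 * ‖φ (c * c)‖) := h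
    _ = ‖a‖ * ‖φ (c * c)‖ := by
        rw [Real.sqrt_mul (by positivity), Real.sqrt_sq (norm_nonneg a)]
        rw [← mul_assoc, mul_comm (Real.sqrt _) ‖a‖, mul_assoc,
          Real.mul_self_sqrt (norm_nonneg _)]

section CPClosure

variable {A C : Type*} [NonUnitalCStarAlgebra A] [NonUnitalCStarAlgebra C]

/-- Conjugation by `c` as a linear map. -/
def conjMap (c : A) : A →ₗ[ℂ] A where
  toFun x := c * x * c
  map_add' x y := by show c * (x + y) * c = _; rw [mul_add, add_mul]
  map_smul' r x := by show c * r • x * c = _; rw [mul_smul_comm, smul_mul_assoc]; rfl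

lemma IsCPMap.conj_dom {φ : A →ₗ[ℂ] C} (hφ : IsCPMap φ) {c : A} (hc : IsSelfAdjoint c) :
    IsCPMap (φ ∘ₗ conjMap c) := by
  intro n y
  obtain ⟨z, hz⟩ := hφ n (y * Matrix.diagonal fun _ => c)
  refine ⟨z, ?_⟩
  rw [← hz]
  have hsd : star (Matrix.diagonal fun _ : Fin n => c) = Matrix.diagonal fun _ : Fin n => c := by
    ext i j
    rw [Matrix.star_apply, Matrix.diagonal_apply, Matrix.diagonal_apply]
    rcases eq_or_ne i j with rfl | h
    · simp [hc.star_eq]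
    · rw [if_neg (Ne.symm h), if_neg h, star_zero]
  ext i j
  rw [Matrix.map_apply, Matrix.map_apply]
  have : star (y * Matrix.diagonal fun _ : Fin n => c) * (y * Matrix.diagonal fun _ : Fin n => c)
      = Matrix.diagonal (fun _ : Fin n => c) * (star y * y) *
        Matrix.diagonal fun _ : Fin n => c := by
    rw [star_mul, hsd]
    noncomm_ring
  rw [this, Matrix.mul_diagonal, Matrix.diagonal_mul]
  rfl

lemma IsCPMap.conj_cod {φ : A →ₗ[ℂ] C} (hφ : IsCPMap φ) {k : C} (hk : IsSelfAdjoint k) :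
    IsCPMap (conjMap k ∘ₗ φ) := by
  intro n y
  obtain ⟨z, hz⟩ := hφ n y
  refine ⟨z * Matrix.diagonal fun _ => k, ?_⟩
  have hsd : star (Matrix.diagonal fun _ : Fin n => k) = Matrix.diagonal fun _ : Fin n => k := by
    ext i j
    rw [Matrix.star_apply, Matrix.diagonal_apply, Matrix.diagonal_apply]
    rcases eq_or_ne i j with rfl | h
    · simp [hk.star_eq]
    · rw [if_neg (Ne.symm h), if_neg h, star_zero]
  have h2 : star (z * Matrix.diagonal fun _ : Fin n => k) *
      (z * Matrix.diagonal fun _ : Fin n => k)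
      = Matrix.diagonal (fun _ : Fin n => k) * (star z * z) *
        Matrix.diagonal fun _ : Fin n => k := by
    rw [star_mul, hsd]
    noncomm_ring
  rw [h2, ← hz]
  ext i j
  rw [Matrix.mul_diagonal, Matrix.diagonal_mul, Matrix.map_apply]
  rfl

lemma IsCPMap.real_smul {φ : A →ₗ[ℂ] C} (hφ : IsCPMap φ) {r : ℝ} (hr : 0 ≤ r) :
    IsCPMap ((r : ℂ) • φ) := by
  intro n y
  obtain ⟨z, hz⟩ := hφ n y
  refine ⟨Real.sqrt r • z, ?_⟩
  ext i j
  rw [Matrix.map_apply]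
  have h1 : ((r : ℂ) • φ) ((star y * y) i j) = (r : ℂ) • φ ((star y * y) i j) := rfl
  have h2 : (star (Real.sqrt r • z) * (Real.sqrt r • z)) i j
      = (Real.sqrt r * Real.sqrt r) • (star z * z) i j := by
    rw [Matrix.mul_apply, Matrix.mul_apply, Finset.smul_sum]
    refine Finset.sum_congr rfl fun k _ => ?_
    rw [Matrix.star_apply, Matrix.smul_apply, Matrix.smul_apply, star_smul,
      star_trivial, smul_mul_smul_comm, Matrix.star_apply]
  rw [h1, h2, Real.mul_self_sqrt hr, ← hz, Matrix.map_apply, ← Complex.coe_smul]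

lemma IsCPMap.pos_rep {φ : A →ₗ[ℂ] C} (hφ : IsCPMap φ) (w : A) :
    ∃ b : C, φ (star w * w) = star b * b := by
  obtain ⟨z, hz⟩ := hφ 1 (Matrix.of ![![w]])
  refine ⟨z 0 0, ?_⟩
  have h1 : φ ((star (Matrix.of ![![w]]) * Matrix.of ![![w]]) 0 0) = (star z * z) 0 0 := by
    rw [← hz]; rfl
  rw [Matrix.mul_apply, Fin.sum_univ_one, Matrix.star_apply] at h1
  rw [Matrix.mul_apply, Fin.sum_univ_one, Matrix.star_apply] at h1
  simpa using h1

end CPClosure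

noncomputable instance matCStar (n : ℕ) : CStarAlgebra (Matrix (Fin n) (Fin n) ℂ) :=
  Matrix.instCStarAlgebra

section cfcFacts
variable {D : Type*} [CStarAlgebra D] {h : D} {δ : ℝ}

lemma cont_sqrtmax : Continuous fun t : ℝ => Real.sqrt (max t δ) := by fun_prop

lemma sqrtmax_pos (hδ : 0 < δ) (t : ℝ) : 0 < Real.sqrt (max t δ) :=
  Real.sqrt_pos.mpr (lt_max_of_lt_right hδ)

lemma cont_invsqrtmax (hδ : 0 < δ) : Continuous fun t : ℝ => (Real.sqrt (max t δ))⁻¹ :=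
  cont_sqrtmax.inv₀ fun t => (sqrtmax_pos hδ t).ne'

lemma mk_eq_one (hδ : 0 < δ) (hsa : IsSelfAdjoint h) :
    cfc (fun t : ℝ => Real.sqrt (max t δ)) h * cfc (fun t : ℝ => (Real.sqrt (max t δ))⁻¹) h
      = 1 := by
  rw [← cfc_mul _ _ h cont_sqrtmax.continuousOn (cont_invsqrtmax hδ).continuousOn]
  calc cfc (fun t : ℝ => Real.sqrt (max t δ) * (Real.sqrt (max t δ))⁻¹) h
      = cfc (fun _ : ℝ => (1 : ℝ)) h :=
        cfc_congr fun t _ => mul_inv_cancel₀ (sqrtmax_pos hδ t).ne'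
    _ = 1 := cfc_const_one ℝ h

lemma km_eq_one (hδ : 0 < δ) (hsa : IsSelfAdjoint h) :
    cfc (fun t : ℝ => (Real.sqrt (max t δ))⁻¹) h * cfc (fun t : ℝ => Real.sqrt (max t δ)) h
      = 1 := by
  rw [← cfc_mul _ _ h (cont_invsqrtmax hδ).continuousOn cont_sqrtmax.continuousOn]
  calc cfc (fun t : ℝ => (Real.sqrt (max t δ))⁻¹ * Real.sqrt (max t δ)) h
      = cfc (fun _ : ℝ => (1 : ℝ)) h :=
        cfc_congr fun t _ => inv_mul_cancel₀ (sqrtmax_pos hδ t).ne'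
    _ = 1 := cfc_const_one ℝ h

lemma khk_norm_le (hδ : 0 < δ) (hsa : IsSelfAdjoint h)
    (hspec : ∀ t ∈ spectrum ℝ h, 0 ≤ t) :
    ‖cfc (fun t : ℝ => (Real.sqrt (max t δ))⁻¹) h * h *
      cfc (fun t : ℝ => (Real.sqrt (max t δ))⁻¹) h‖ ≤ 1 := by
  have heq : cfc (fun t : ℝ => (Real.sqrt (max t δ))⁻¹) h * h *
      cfc (fun t : ℝ => (Real.sqrt (max t δ))⁻¹) h
      = cfc (fun t : ℝ => (Real.sqrt (max t δ))⁻¹ * t * (Real.sqrt (max t δ))⁻¹) h := by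
    rw [cfc_mul (fun t : ℝ => (Real.sqrt (max t δ))⁻¹ * t)
        (fun t : ℝ => (Real.sqrt (max t δ))⁻¹) h
        ((cont_invsqrtmax hδ).mul continuous_id).continuousOn
        (cont_invsqrtmax hδ).continuousOn,
      cfc_mul (fun t : ℝ => (Real.sqrt (max t δ))⁻¹) (fun t : ℝ => t) h
        (cont_invsqrtmax hδ).continuousOn (continuous_id.continuousOn),
      cfc_id' ℝ h]
  rw [heq]
  refine norm_cfc_le zero_le_one fun t ht => ?_
  have ht0 := hspec t ht
  have hmax : 0 < max t δ := lt_max_of_lt_right hδ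
  have hval : (Real.sqrt (max t δ))⁻¹ * t * (Real.sqrt (max t δ))⁻¹ = t / max t δ := by
    rw [mul_comm _ t, mul_assoc, ← mul_inv, Real.mul_self_sqrt hmax.le]
    rfl
  rw [hval, Real.norm_of_nonneg (by positivity)]
  exact div_le_one_of_le₀ (le_max_left t δ) hmax.le

lemma mm_sub_norm_le (hδ : 0 < δ) (hsa : IsSelfAdjoint h)
    (hspec : ∀ t ∈ spectrum ℝ h, 0 ≤ t) :
    ‖cfc (fun t : ℝ => Real.sqrt (max t δ)) h * cfc (fun t : ℝ => Real.sqrt (max t δ)) h - h‖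
      ≤ δ := by
  have heq : cfc (fun t : ℝ => Real.sqrt (max t δ)) h * cfc (fun t : ℝ => Real.sqrt (max t δ)) h
      - h = cfc (fun t : ℝ => max t δ - t) h := by
    rw [cfc_sub (fun t : ℝ => max t δ) (fun t : ℝ => t) h
        (continuous_id.max continuous_const).continuousOn (continuous_id.continuousOn),
      cfc_id' ℝ h, ← cfc_mul _ _ h cont_sqrtmax.continuousOn cont_sqrtmax.continuousOn]
    congr 1
    refine cfc_congr fun t _ => ?_
    rw [Real.mul_self_sqrt (lt_max_of_lt_right hδ).le]
  rw [heq]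
  refine norm_cfc_le hδ.le fun t ht => ?_
  have h1 : t ⊔ δ ≤ t + δ := max_le (by linarith [hspec t ht, hδ.le]) (by linarith [hspec t ht])
  have h2 : t ≤ t ⊔ δ := le_max_left t δ
  rw [Real.norm_of_nonneg (by linarith)]
  linarith

end cfcFacts

lemma exists_near_unit {A : Type*} [NonUnitalCStarAlgebra A] (F : Finset A) {ε : ℝ}
    (hε : 0 < ε) : ∃ e : A, IsSelfAdjoint e ∧ ‖e‖ ≤ 1 ∧ ∀ a ∈ F, ‖e * a * e - a‖ < ε := by
  letI := nonunitalPartialOrder A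
  haveI := nonunitalStarOrderedRing A
  have H := CStarAlgebra.increasingApproximateUnit (A := A)
  have h1 : ∀ᶠ x in CStarAlgebra.approximateUnit A, ∀ a ∈ F,
      ‖a * x - a‖ < ε / 2 ∧ ‖x * a - a‖ < ε / 2 := by
    rw [Filter.eventually_all_finset F]
    intro a _
    have hl := (H.tendsto_mul_left a).sub_const a
    have hr := (H.tendsto_mul_right a).sub_const a
    have hl' := hl.norm.eventually_lt_const (u := ε / 2) (by simpa using half_pos hε)
    have hr' := hr.norm.eventually_lt_const (u := ε / 2) (by simpa using half_pos hε)
    filter_upwards [hl', hr'] with x hx hy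
    constructor
    · simpa using hx
    · simpa using hy
  have h2 := H.eventually_nonneg
  have h3 := H.eventually_norm
  haveI : (CStarAlgebra.approximateUnit A).NeBot := H.neBot
  obtain ⟨e, he1, he2, he3⟩ := (h1.and (h2.and h3)).exists
  refine ⟨e, .of_nonneg he2, he3, fun a ha => ?_⟩
  obtain ⟨hxa, hax⟩ := he1 a ha
  calc ‖e * a * e - a‖ = ‖e * (a * e - a) + (e * a - a)‖ := by
        congr 1
        noncomm_ring
    _ ≤ ‖e * (a * e - a)‖ + ‖e * a - a‖ := norm_add_le _ _
    _ ≤ ‖e‖ * ‖a * e - a‖ + ‖e * a - a‖ := by gcongr; exact norm_mul_le e _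
    _ ≤ 1 * ‖a * e - a‖ + ‖e * a - a‖ := by gcongr
    _ < 1 * (ε / 2) + ε / 2 := by rw [one_mul, one_mul]; exact add_lt_add hxa hax
    _ = ε := by ring

end Aux

set_option maxHeartbeats 1000000 in
/-- Lemma: contractive nuclear maps factor approximately through
matrix algebras via *contractive* c.p. maps.  Here the matrix algebra `Mₙ(ℂ)` carries its
C*-norm (the `ℓ²` operator norm). -/
theorem contractive_nuclear_approx_factor_contractive
    {A B : Type*} [NonUnitalCStarAlgebra A] [NonUnitalCStarAlgebra B]
    (ρ : A →ₗ[ℂ] B) (hcp : IsCPMap ρ) (hnuc : IsNuclearMap ρ)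
    (hcontr : ∀ a : A, ‖ρ a‖ ≤ ‖a‖) :
    ∀ (F : Finset A) (ε : ℝ), 0 < ε →
      ∃ (n : ℕ), 0 < n ∧
        ∃ (ψ : A →ₗ[ℂ] Matrix (Fin n) (Fin n) ℂ) (η : Matrix (Fin n) (Fin n) ℂ →ₗ[ℂ] B),
          IsCPMap ψ ∧ IsCPMap η ∧
          (∀ a : A, ‖ψ a‖ ≤ ‖a‖) ∧ (∀ x : Matrix (Fin n) (Fin n) ℂ, ‖η x‖ ≤ ‖x‖) ∧
          ∀ a ∈ F, ‖ρ a - η (ψ a)‖ < ε := by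
  intro F ε hε
  classical
  -- bound on the norms of elements of `F`
  set M : ℝ := 1 + ∑ a ∈ F, ‖a‖ with hM_def
  have hM1 : 1 ≤ M := by
    have : (0 : ℝ) ≤ ∑ a ∈ F, ‖a‖ := Finset.sum_nonneg fun a _ => norm_nonneg a
    simp [hM_def]; linarith
  have hM0 : 0 < M := by linarith
  have hMa : ∀ a ∈ F, ‖a‖ ≤ M - 1 := fun a ha => by
    have := Finset.single_le_sum (fun b (_ : b ∈ F) => norm_nonneg b) ha
    simp [hM_def]; linarith
  -- tolerance
  set δ₁ : ℝ := min 1 (ε / (8 * M)) with hδ₁_def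
  have hδ₁pos : 0 < δ₁ := lt_min one_pos (by positivity)
  have hδ₁le1 : δ₁ ≤ 1 := min_le_left _ _
  have hδ₁leε : δ₁ ≤ ε / (8 * M) := min_le_right _ _
  -- near unit
  obtain ⟨e, he_sa, he_norm, he_close⟩ := exists_near_unit F (show (0:ℝ) < ε / 8 by positivity)
  -- nuclearity
  obtain ⟨n, hn, ψ₀, η₀, hψcp, hηcp, happrox⟩ :=
    hnuc (insert (e * e) (F.image fun a => e * a * e)) δ₁ hδ₁pos
  refine ⟨n, hn, ?_⟩
  -- the positive element h = ψ₀ (e * e)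
  set h : Matrix (Fin n) (Fin n) ℂ := ψ₀ (e * e) with hh_def
  obtain ⟨b, hb⟩ := hψcp.pos_rep e
  rw [he_sa.star_eq] at hb
  have hsa_h : IsSelfAdjoint h := by rw [hh_def, hb]; exact IsSelfAdjoint.star_mul_self b
  have hspec : ∀ t ∈ spectrum ℝ h, 0 ≤ t := by
    rw [hh_def, hb]; exact spectrum_star_mul_self_nonneg
  -- cutoff parameter
  set Cη : ℝ := ‖η₀ 1‖ with hCη_def
  have hCη0 : 0 ≤ Cη := norm_nonneg _
  set δ : ℝ := δ₁ / (Cη + 1) with hδ_def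
  have hδpos : 0 < δ := by positivity
  -- the elements k and m
  set k : Matrix (Fin n) (Fin n) ℂ := cfc (fun t : ℝ => (Real.sqrt (max t δ))⁻¹) h with hk_def
  set m : Matrix (Fin n) (Fin n) ℂ := cfc (fun t : ℝ => Real.sqrt (max t δ)) h with hm_def
  have hk_sa : IsSelfAdjoint k := cfc_predicate _ _
  have hm_sa : IsSelfAdjoint m := cfc_predicate _ _
  have hmk : m * k = 1 := mk_eq_one hδpos hsa_h
  have hkm : k * m = 1 := km_eq_one hδpos hsa_h
  have hkhk : ‖k * h * k‖ ≤ 1 := khk_norm_le hδpos hsa_h hspec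
  have hmmh : ‖m * m - h‖ ≤ δ := mm_sub_norm_le hδpos hsa_h hspec
  -- the final maps
  set β : ℝ := 1 + 2 * δ₁ with hβ_def
  have hβpos : 0 < β := by positivity
  have hβ1 : 1 ≤ β := by simp [hβ_def]; linarith
  set ψ : A →ₗ[ℂ] Matrix (Fin n) (Fin n) ℂ := conjMap k ∘ₗ ψ₀ ∘ₗ conjMap e with hψ_def
  set η : Matrix (Fin n) (Fin n) ℂ →ₗ[ℂ] B :=
    ((β⁻¹ : ℝ) : ℂ) • (η₀ ∘ₗ conjMap m) with hη_def
  have hψ_apply : ∀ a : A, ψ a = k * ψ₀ (e * a * e) * k := fun a => rfl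
  have hη_apply : ∀ x, η x = ((β⁻¹ : ℝ) : ℂ) • η₀ (m * x * m) := fun x => rfl
  -- complete positivity
  have hψ_cp : IsCPMap ψ := by
    rw [hψ_def, ← LinearMap.comp_assoc]
    exact (hψcp.conj_dom he_sa).conj_cod hk_sa
  have hη_cp : IsCPMap η := (hηcp.conj_dom hm_sa).real_smul (inv_nonneg.mpr hβpos.le)
  -- basic norm bounds for η₀
  have hη₀_bdd : ∀ x, ‖η₀ x‖ ≤ ‖x‖ * Cη := by
    intro x
    have h1 := key_ineq hηcp (IsSelfAdjoint.one (R := Matrix (Fin n) (Fin n) ℂ)) x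
    rwa [one_mul, mul_one, mul_one] at h1
  -- bound on ‖η₀ (m * m)‖
  have hρe : ‖ρ (e * e)‖ ≤ 1 := by
    calc ‖ρ (e * e)‖ ≤ ‖e * e‖ := hcontr _
      _ ≤ ‖e‖ * ‖e‖ := norm_mul_le e e
      _ ≤ 1 * 1 := by gcongr
      _ = 1 := one_mul 1
  have happrox_ee : ‖ρ (e * e) - η₀ (ψ₀ (e * e))‖ < δ₁ :=
    happrox _ (Finset.mem_insert_self _ _)
  have hη₀h : ‖η₀ h‖ ≤ 1 + δ₁ := by
    have h1 : ‖η₀ (ψ₀ (e * e))‖ ≤ ‖ρ (e * e)‖ + δ₁ := by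
      have := norm_sub_norm_le (ρ (e * e)) (η₀ (ψ₀ (e * e)))
      have h2 := happrox_ee
      have h3 := abs_norm_sub_norm_le (ρ (e * e)) (η₀ (ψ₀ (e * e)))
      have h4 := (abs_le.mp h3).1
      linarith [h2, h4]
    rw [hh_def]
    linarith [hρe]
  have hη₀mm : ‖η₀ (m * m)‖ ≤ β := by
    have h1 : η₀ (m * m) = η₀ h + η₀ (m * m - h) := by
      rw [← map_add]; congr 1; abel
    have h2 : ‖η₀ (m * m - h)‖ ≤ δ₁ := by
      calc ‖η₀ (m * m - h)‖ ≤ ‖m * m - h‖ * Cη := hη₀_bdd _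
        _ ≤ δ * Cη := by gcongr
        _ = δ₁ * (Cη / (Cη + 1)) := by rw [hδ_def]; ring
        _ ≤ δ₁ * 1 := by
            gcongr
            exact div_le_one_of_le₀ (by linarith) (by positivity)
        _ = δ₁ := mul_one _
    calc ‖η₀ (m * m)‖ ≤ ‖η₀ h‖ + ‖η₀ (m * m - h)‖ := h1 ▸ norm_add_le _ _
      _ ≤ (1 + δ₁) + δ₁ := add_le_add hη₀h h2
      _ = β := by rw [hβ_def]; ring
  -- contractivity of ψ
  have hψ_contr : ∀ a : A, ‖ψ a‖ ≤ ‖a‖ := by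
    intro a
    have hcp' : IsCPMap (conjMap k ∘ₗ ψ₀) := hψcp.conj_cod hk_sa
    have h1 := key_ineq hcp' he_sa a
    have h2 : (conjMap k ∘ₗ ψ₀) (e * a * e) = ψ a := rfl
    have h3 : (conjMap k ∘ₗ ψ₀) (e * e) = k * h * k := rfl
    rw [h2, h3] at h1
    calc ‖ψ a‖ ≤ ‖a‖ * ‖k * h * k‖ := h1
      _ ≤ ‖a‖ * 1 := by gcongr
      _ = ‖a‖ := mul_one _
  -- contractivity of η
  have hη_contr : ∀ x : Matrix (Fin n) (Fin n) ℂ, ‖η x‖ ≤ ‖x‖ := by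
    intro x
    rw [hη_apply, norm_smul]
    have h1 : ‖((β⁻¹ : ℝ) : ℂ)‖ = β⁻¹ := by
      rw [Complex.norm_real, Real.norm_of_nonneg (inv_nonneg.mpr hβpos.le)]
    rw [h1]
    have h2 : ‖η₀ (m * x * m)‖ ≤ ‖x‖ * β := by
      calc ‖η₀ (m * x * m)‖ ≤ ‖x‖ * ‖η₀ (m * m)‖ := key_ineq hηcp hm_sa x
        _ ≤ ‖x‖ * β := by gcongr
    calc β⁻¹ * ‖η₀ (m * x * m)‖ ≤ β⁻¹ * (‖x‖ * β) := by gcongr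
      _ = ‖x‖ := by field_simp
  -- the approximation property
  refine ⟨ψ, η, hψ_cp, hη_cp, hψ_contr, hη_contr, fun a ha => ?_⟩
  have hG : e * a * e ∈ insert (e * e) (F.image fun a => e * a * e) :=
    Finset.mem_insert_of_mem (Finset.mem_image_of_mem _ ha)
  have happ : ‖ρ (e * a * e) - η₀ (ψ₀ (e * a * e))‖ < δ₁ := happrox _ hG
  -- composition computation
  have hcompose : η (ψ a) = ((β⁻¹ : ℝ) : ℂ) • η₀ (ψ₀ (e * a * e)) := by
    rw [hη_apply, hψ_apply]
    congr 2
    rw [show m * (k * ψ₀ (e * a * e) * k) * m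
        = (m * k) * ψ₀ (e * a * e) * (k * m) from by noncomm_ring, hmk, hkm, one_mul, mul_one]
  -- norm bound for the middle term
  have hv_bdd : ‖η₀ (ψ₀ (e * a * e))‖ ≤ ‖a‖ + δ₁ := by
    have h3 := abs_norm_sub_norm_le (ρ (e * a * e)) (η₀ (ψ₀ (e * a * e)))
    have h4 := (abs_le.mp h3).1
    have h5 : ‖ρ (e * a * e)‖ ≤ ‖a‖ := by
      calc ‖ρ (e * a * e)‖ ≤ ‖e * a * e‖ := hcontr _
        _ ≤ ‖e * a‖ * ‖e‖ := norm_mul_le _ _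
        _ ≤ (‖e‖ * ‖a‖) * ‖e‖ := by gcongr; exact norm_mul_le _ _
        _ ≤ (1 * ‖a‖) * 1 := by gcongr
        _ = ‖a‖ := by ring
    linarith [happ]
  have ht3 : ‖η₀ (ψ₀ (e * a * e)) - η (ψ a)‖ ≤ 2 * δ₁ * (‖a‖ + δ₁) := by
    rw [hcompose]
    have h1 : η₀ (ψ₀ (e * a * e)) - ((β⁻¹ : ℝ) : ℂ) • η₀ (ψ₀ (e * a * e))
        = (((1 - β⁻¹ : ℝ)) : ℂ) • η₀ (ψ₀ (e * a * e)) := by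
      push_cast
      rw [sub_smul, one_smul]
    rw [h1, norm_smul, Complex.norm_real]
    have h2 : (0:ℝ) ≤ 1 - β⁻¹ := by
      have : β⁻¹ ≤ 1 := inv_le_one_of_one_le₀ hβ1
      linarith
    rw [Real.norm_of_nonneg h2]
    have h3 : 1 - β⁻¹ ≤ 2 * δ₁ := by
      have h4 : 1 - β⁻¹ = 2 * δ₁ / β := by
        field_simp
        rw [hβ_def]; ring
      rw [h4]
      calc 2 * δ₁ / β ≤ 2 * δ₁ / 1 := by gcongr
        _ = 2 * δ₁ := div_one _
    have h5 : ‖η₀ (ψ₀ (e * a * e))‖ ≤ ‖a‖ + δ₁ := hv_bdd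
    nlinarith [norm_nonneg (η₀ (ψ₀ (e * a * e))), hδ₁pos.le, h2]
  -- putting it together
  have hterm1 : ‖ρ a - ρ (e * a * e)‖ < ε / 8 := by
    rw [← map_sub]
    calc ‖ρ (a - e * a * e)‖ ≤ ‖a - e * a * e‖ := hcontr _
      _ = ‖e * a * e - a‖ := by rw [norm_sub_rev]
      _ < ε / 8 := he_close a ha
  have hbound : 2 * δ₁ * (‖a‖ + δ₁) ≤ ε / 4 := by
    have h1 : ‖a‖ + δ₁ ≤ M := by
      have := hMa a ha
      linarith
    have h2 : 2 * δ₁ * (‖a‖ + δ₁) ≤ 2 * δ₁ * M := by nlinarith [hδ₁pos.le]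
    have h3 : 2 * δ₁ * M ≤ 2 * (ε / (8 * M)) * M := by nlinarith [hδ₁leε, hM0]
    have h4 : 2 * (ε / (8 * M)) * M = ε / 4 := by field_simp; ring
    exact h2.trans (h3.trans h4.le)
  calc ‖ρ a - η (ψ a)‖
      = ‖(ρ a - ρ (e * a * e)) + ((ρ (e * a * e) - η₀ (ψ₀ (e * a * e)))
          + (η₀ (ψ₀ (e * a * e)) - η (ψ a)))‖ := by congr 1; abel
    _ ≤ ‖ρ a - ρ (e * a * e)‖ + ‖(ρ (e * a * e) - η₀ (ψ₀ (e * a * e)))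
          + (η₀ (ψ₀ (e * a * e)) - η (ψ a))‖ := norm_add_le _ _
    _ ≤ ‖ρ a - ρ (e * a * e)‖ + (‖ρ (e * a * e) - η₀ (ψ₀ (e * a * e))‖
          + ‖η₀ (ψ₀ (e * a * e)) - η (ψ a)‖) := by gcongr; exact norm_add_le _ _
    _ < ε / 8 + (δ₁ + 2 * δ₁ * (‖a‖ + δ₁)) :=
        add_lt_add_of_lt_of_le hterm1 (add_lt_add_of_lt_of_le happ ht3).le
    _ ≤ ε / 8 + (ε / (8 * M) + ε / 4) :=
        add_le_add_right (add_le_add hδ₁leε hbound) _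
    _ ≤ ε / 8 + (ε / 8 + ε / 4) := by
        have hdiv : ε / (8 * M) ≤ ε / 8 := by
          rw [div_le_div_iff₀ (by positivity) (by norm_num)]
          nlinarith [hM1, hε.le]
        exact add_le_add_right (add_le_add hdiv le_rfl) _
    _ = ε / 2 := by ring
    _ < ε := by linarith
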